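/- In a graph where all type-A players are pairwise adjacent (forming a clique), and each type-B player is adjacent to exactly one fixed type-A node j, the following hold: every type-B node has distance 1 to j, distance 2 to every other type-A node, and distance 2 to every other type-B node. Consequently the social cost equals 2|T_B|(|T_B| − 1 + c + (A+1)(|T_A| − 1/2)) + |T_A|(|T_A| − 1)(c_A + A), where c = (c_A + c_B)/2. -/
import Mathlib


open SimpleGraph Finset

/-- Cost of player `i`: link costs plus weighted distances (weight `A` to type-A nodes). -/
noncomputable def cost {V : Type*} [Fintype V] [DecidableEq V] (A cA cB : ℝ) (tA : V → Bool)
    (G : SimpleGraph V) (i : V) : ℝ :=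
  (Set.ncard {j | G.Adj i j} : ℝ) * (if tA i then cA else cB) +
    ∑ j ∈ Finset.univ.erase i, (if tA j then A else 1) * (G.dist i j : ℝ)

/-- Social cost: sum of all players' costs. -/
noncomputable def socialCost {V : Type*} [Fintype V] [DecidableEq V] (A cA cB : ℝ)
    (tA : V → Bool) (G : SimpleGraph V) : ℝ :=
  ∑ i, cost A cA cB tA G i

/-- The graph on `Fin nA ⊕ Fin nB`: complete graph on the type-A nodes, and every type-B
node attached as a leaf to the distinguished type-A node `0`. -/
def cliqueWithLeaves (nA nB : ℕ) : SimpleGraph (Fin nA ⊕ Fin nB) :=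
  SimpleGraph.fromRel (fun u v =>
    match u, v with
    | .inl _, .inl _ => True
    | .inl a, .inr _ => (a : ℕ) = 0
    | .inr _, .inl a => (a : ℕ) = 0
    | .inr _, .inr _ => False)

lemma dist_eq_two' {V : Type*} {G : SimpleGraph V} {u v w : V} (huv : u ≠ v)
    (hadj : ¬ G.Adj u v) (h1 : G.Adj u w) (h2 : G.Adj w v) : G.dist u v = 2 := by
  have hle : G.dist u v ≤ 2 := by
    simpa using SimpleGraph.dist_le (Walk.cons h1 (Walk.cons h2 Walk.nil))
  have h0 : G.dist u v ≠ 0 := by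
    rw [ne_eq, SimpleGraph.dist_eq_zero_iff_eq_or_not_reachable]
    push_neg
    exact ⟨huv, ⟨Walk.cons h1 (Walk.cons h2 Walk.nil)⟩⟩
  have h1' : G.dist u v ≠ 1 := fun h => hadj (SimpleGraph.dist_eq_one_iff_adj.mp h)
  omega

section
variable (nA nB : ℕ)

lemma adj_ll {a a' : Fin nA} :
    (cliqueWithLeaves nA nB).Adj (.inl a) (.inl a') ↔ a ≠ a' := by
  simp [cliqueWithLeaves, SimpleGraph.fromRel_adj]

lemma adj_lr {a : Fin nA} {b : Fin nB} :
    (cliqueWithLeaves nA nB).Adj (.inl a) (.inr b) ↔ (a : ℕ) = 0 := by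
  simp [cliqueWithLeaves, SimpleGraph.fromRel_adj]

lemma adj_rl {a : Fin nA} {b : Fin nB} :
    (cliqueWithLeaves nA nB).Adj (.inr b) (.inl a) ↔ (a : ℕ) = 0 := by
  simp [cliqueWithLeaves, SimpleGraph.fromRel_adj]

lemma adj_rr {b b' : Fin nB} :
    ¬ (cliqueWithLeaves nA nB).Adj (.inr b) (.inr b') := by
  simp [cliqueWithLeaves, SimpleGraph.fromRel_adj]

end

section
variable {nA nB : ℕ}

lemma dll {a a' : Fin nA} (h : a ≠ a') :
    (cliqueWithLeaves nA nB).dist (.inl a) (.inl a') = 1 :=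
  SimpleGraph.dist_eq_one_iff_adj.mpr ((adj_ll _ _).mpr h)

lemma drl0 {b : Fin nB} {a : Fin nA} (h : (a : ℕ) = 0) :
    (cliqueWithLeaves nA nB).dist (.inr b) (.inl a) = 1 :=
  SimpleGraph.dist_eq_one_iff_adj.mpr ((adj_rl _ _).mpr h)

lemma drl2 (hA : 0 < nA) {b : Fin nB} {a : Fin nA} (h : (a : ℕ) ≠ 0) :
    (cliqueWithLeaves nA nB).dist (.inr b) (.inl a) = 2 := by
  refine dist_eq_two' (by simp) (by simp [adj_rl, h]) (w := .inl ⟨0, hA⟩)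
    ((adj_rl _ _).mpr rfl) ((adj_ll _ _).mpr ?_)
  exact fun he => h (by simp [← he])

lemma dlr2 (hA : 0 < nA) {b : Fin nB} {a : Fin nA} (h : (a : ℕ) ≠ 0) :
    (cliqueWithLeaves nA nB).dist (.inl a) (.inr b) = 2 := by
  rw [SimpleGraph.dist_comm]; exact drl2 hA h

lemma dlr0 {b : Fin nB} {a : Fin nA} (h : (a : ℕ) = 0) :
    (cliqueWithLeaves nA nB).dist (.inl a) (.inr b) = 1 := by
  rw [SimpleGraph.dist_comm]; exact drl0 h

lemma drr (hA : 0 < nA) {b b' : Fin nB} (h : b ≠ b') :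
    (cliqueWithLeaves nA nB).dist (.inr b) (.inr b') = 2 := by
  refine dist_eq_two' (by simp [h]) (adj_rr _ _) (w := .inl ⟨0, hA⟩)
    ((adj_rl _ _).mpr rfl) ((adj_lr _ _).mpr rfl)

end

section
variable {nA nB : ℕ}

lemma deg_hub (hA : 0 < nA) :
    {j | (cliqueWithLeaves nA nB).Adj (.inl ⟨0, hA⟩) j}.ncard = nA + nB - 1 := by
  have hs : {j | (cliqueWithLeaves nA nB).Adj (.inl ⟨0, hA⟩) j} =
      ↑((univ : Finset (Fin nA ⊕ Fin nB)).erase (.inl ⟨0, hA⟩)) := by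
    ext j
    rcases j with a | b
    · simp [adj_ll, eq_comm, Sum.inl.injEq]
    · simp [adj_lr]
  rw [hs, Set.ncard_coe_finset, Finset.card_erase_of_mem (mem_univ _)]
  simp [Fintype.card_sum]

lemma deg_nonhub {a : Fin nA} (h : (a : ℕ) ≠ 0) :
    {j | (cliqueWithLeaves nA nB).Adj (.inl a) j}.ncard = nA - 1 := by
  have hs : {j | (cliqueWithLeaves nA nB).Adj (.inl a) j} =
      ↑(((univ : Finset (Fin nA)).erase a).image (Sum.inl : Fin nA → Fin nA ⊕ Fin nB)) := by
    ext j
    rcases j with a' | b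
    · simp [adj_ll, eq_comm (a := a')]
    · simp [adj_lr, h]
  rw [hs, Set.ncard_coe_finset, Finset.card_image_of_injective _ Sum.inl_injective,
    Finset.card_erase_of_mem (mem_univ _)]
  simp

lemma deg_leaf (hA : 0 < nA) (b : Fin nB) :
    {j | (cliqueWithLeaves nA nB).Adj (.inr b) j}.ncard = 1 := by
  have hs : {j | (cliqueWithLeaves nA nB).Adj (.inr b) j} =
      {(Sum.inl ⟨0, hA⟩ : Fin nA ⊕ Fin nB)} := by
    ext j
    rcases j with a | b'
    · simp [adj_rl, Sum.inl.injEq, Fin.ext_iff]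
    · simp [adj_rr _ _]
  rw [hs, Set.ncard_singleton]

end

lemma sum_const_off {α : Type*} [Fintype α] [DecidableEq α] (z : α) (f : α → ℝ) (r : ℝ)
    (h0 : f z = 0) (h1 : ∀ x, x ≠ z → f x = r) :
    ∑ x, f x = ((Fintype.card α - 1 : ℕ) : ℝ) * r := by
  rw [← Finset.sum_erase _ h0]
  rw [Finset.sum_congr rfl (fun x hx => h1 x (Finset.mem_erase.mp hx).1)]
  rw [Finset.sum_const, Finset.card_erase_of_mem (mem_univ _), card_univ, nsmul_eq_mul]

section
variable {nA nB : ℕ} {A cA cB : ℝ}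

lemma cost_hub (hA : 0 < nA) :
    cost A cA cB (fun v => v.isLeft) (cliqueWithLeaves nA nB) (.inl ⟨0, hA⟩) =
      ((nA + nB - 1 : ℕ) : ℝ) * cA + A * ((nA - 1 : ℕ) : ℝ) + (nB : ℝ) := by
  set z : Fin nA := ⟨0, hA⟩
  rw [cost, deg_hub hA]
  rw [Finset.sum_erase _ (by simp [SimpleGraph.dist_self])]
  rw [Fintype.sum_sum_type]
  have e1 : ∑ a' : Fin nA,
      (if (Sum.inl a' : Fin nA ⊕ Fin nB).isLeft then A else 1) *
        ((cliqueWithLeaves nA nB).dist (.inl z) (.inl a') : ℝ) = A * ((nA - 1 : ℕ) : ℝ) := by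
    have := sum_const_off z (fun a' => (if (Sum.inl a' : Fin nA ⊕ Fin nB).isLeft then A else 1) *
        ((cliqueWithLeaves nA nB).dist (.inl z) (.inl a') : ℝ)) A
      (by simp [SimpleGraph.dist_self]) (fun x hx => by simp [dll (Ne.symm hx)])
    simpa [mul_comm] using this
  have e2 : ∑ b : Fin nB,
      (if (Sum.inr b : Fin nA ⊕ Fin nB).isLeft then A else 1) *
        ((cliqueWithLeaves nA nB).dist (.inl z) (.inr b) : ℝ) = (nB : ℝ) := by
    simp [dlr0 (show ((z : Fin nA) : ℕ) = 0 from rfl)]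
  rw [e1, e2]; simp only [Sum.isLeft_inl, Sum.isLeft_inr, if_true, Bool.false_eq_true, if_false]; ring

lemma cost_nonhub {a : Fin nA} (h : (a : ℕ) ≠ 0) (hA : 0 < nA) :
    cost A cA cB (fun v => v.isLeft) (cliqueWithLeaves nA nB) (.inl a) =
      ((nA - 1 : ℕ) : ℝ) * cA + A * ((nA - 1 : ℕ) : ℝ) + 2 * (nB : ℝ) := by
  rw [cost, deg_nonhub h]
  rw [Finset.sum_erase _ (by simp [SimpleGraph.dist_self])]
  rw [Fintype.sum_sum_type]
  have e1 : ∑ a' : Fin nA,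
      (if (Sum.inl a' : Fin nA ⊕ Fin nB).isLeft then A else 1) *
        ((cliqueWithLeaves nA nB).dist (.inl a) (.inl a') : ℝ) = A * ((nA - 1 : ℕ) : ℝ) := by
    have := sum_const_off a (fun a' => (if (Sum.inl a' : Fin nA ⊕ Fin nB).isLeft then A else 1) *
        ((cliqueWithLeaves nA nB).dist (.inl a) (.inl a') : ℝ)) A
      (by simp [SimpleGraph.dist_self]) (fun x hx => by simp [dll (Ne.symm hx)])
    simpa [mul_comm] using this
  have e2 : ∑ b : Fin nB,
      (if (Sum.inr b : Fin nA ⊕ Fin nB).isLeft then A else 1) *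
        ((cliqueWithLeaves nA nB).dist (.inl a) (.inr b) : ℝ) = 2 * (nB : ℝ) := by
    simp [dlr2 hA h, mul_comm]
  rw [e1, e2]; simp only [Sum.isLeft_inl, Sum.isLeft_inr, if_true, Bool.false_eq_true, if_false]; ring

lemma cost_leaf (hA : 0 < nA) (b : Fin nB) :
    cost A cA cB (fun v => v.isLeft) (cliqueWithLeaves nA nB) (.inr b) =
      cB + (A * 1 + A * 2 * ((nA - 1 : ℕ) : ℝ)) + 2 * ((nB - 1 : ℕ) : ℝ) := by
  rw [cost, deg_leaf hA]
  rw [Finset.sum_erase _ (by simp [SimpleGraph.dist_self])]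
  rw [Fintype.sum_sum_type]
  have e1 : ∑ a : Fin nA,
      (if (Sum.inl a : Fin nA ⊕ Fin nB).isLeft then A else 1) *
        ((cliqueWithLeaves nA nB).dist (.inr b) (.inl a) : ℝ)
      = A * 1 + A * 2 * ((nA - 1 : ℕ) : ℝ) := by
    have key : ∀ a : Fin nA, A * ((cliqueWithLeaves nA nB).dist (.inr b) (.inl a) : ℝ)
        = A * 1 * (if (⟨0, hA⟩ : Fin nA) = a then 1 else 0)
          + A * 2 * (if (⟨0, hA⟩ : Fin nA) = a then 0 else 1) := by
      intro a
      by_cases ha : (⟨0, hA⟩ : Fin nA) = a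
      · rw [drl0 (by simp [← ha])]; simp [ha]
      · rw [drl2 hA (by simp [Fin.ext_iff, eq_comm] at ha ⊢; omega)]; simp [ha]
    have hif : ∀ x : Fin nA, (if (Sum.inl x : Fin nA ⊕ Fin nB).isLeft then A else 1) = A := by
      simp
    simp only [hif, key]
    rw [Finset.sum_add_distrib, ← Finset.mul_sum, ← Finset.mul_sum]
    have s1 : ∑ a : Fin nA, (if (⟨0, hA⟩ : Fin nA) = a then (1:ℝ) else 0) = 1 := by
      simp
    have s2 : ∑ a : Fin nA, (if (⟨0, hA⟩ : Fin nA) = a then (0:ℝ) else 1) = ((nA - 1 : ℕ) : ℝ) := by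
      have := sum_const_off (⟨0, hA⟩ : Fin nA)
        (fun a => if (⟨0, hA⟩ : Fin nA) = a then (0:ℝ) else 1) 1 (by simp)
        (fun x hx => by simp [Ne.symm hx])
      simpa using this
    rw [s1, s2]; ring
  have e2 : ∑ b' : Fin nB,
      (if (Sum.inr b' : Fin nA ⊕ Fin nB).isLeft then A else 1) *
        ((cliqueWithLeaves nA nB).dist (.inr b) (.inr b') : ℝ) = 2 * ((nB - 1 : ℕ) : ℝ) := by
    have := sum_const_off b (fun b' =>
        (if (Sum.inr b' : Fin nA ⊕ Fin nB).isLeft then A else 1) *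
        ((cliqueWithLeaves nA nB).dist (.inr b) (.inr b') : ℝ)) 2
      (by simp [SimpleGraph.dist_self]) (fun x hx => by simp [drr hA (Ne.symm hx)])
    simpa [mul_comm] using this
  rw [e1, e2]; simp only [Sum.isLeft_inl, Sum.isLeft_inr, if_true, Bool.false_eq_true, if_false]; ring

end

/-- In the clique-with-leaves graph, each type-B node is at distance 1 from the hub,
distance 2 from other type-A nodes and from other type-B nodes, and the social cost equals
`2|T_B|(|T_B| - 1 + c + (A+1)(|T_A| - 1/2)) + |T_A|(|T_A| - 1)(c_A + A)`. -/
theorem cliqueWithLeaves_distances_and_socialCost (nA nB : ℕ) (hA : 0 < nA)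
    (A cA cB : ℝ) (hA1 : 1 < A) (hc : 1 < cA) (hcc : cA ≤ cB) :
    (∀ b : Fin nB, (cliqueWithLeaves nA nB).dist (.inr b) (.inl ⟨0, hA⟩) = 1) ∧
    (∀ b : Fin nB, ∀ a : Fin nA, (a : ℕ) ≠ 0 →
      (cliqueWithLeaves nA nB).dist (.inr b) (.inl a) = 2) ∧
    (∀ b b' : Fin nB, b ≠ b' →
      (cliqueWithLeaves nA nB).dist (.inr b) (.inr b') = 2) ∧
    socialCost A cA cB (fun v => v.isLeft) (cliqueWithLeaves nA nB) =
      2 * (nB : ℝ) * ((nB : ℝ) - 1 + (cA + cB) / 2 + (A + 1) * ((nA : ℝ) - 1 / 2)) +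
        (nA : ℝ) * ((nA : ℝ) - 1) * (cA + A) := by
  refine ⟨fun b => drl0 rfl, fun b a ha => drl2 hA ha, fun b b' h => drr hA h, ?_⟩
  rw [socialCost, Fintype.sum_sum_type]
  rw [← Finset.add_sum_erase _ _ (mem_univ (⟨0, hA⟩ : Fin nA))]
  rw [cost_hub hA]
  rw [Finset.sum_congr rfl (fun a ha => cost_nonhub
    (fun hv => (Finset.mem_erase.mp ha).1 (Fin.ext hv)) hA)]
  rw [Finset.sum_congr rfl (fun b _ => cost_leaf hA b)]
  simp only [Finset.sum_const, Finset.card_erase_of_mem (mem_univ _), card_univ,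
    Fintype.card_fin, nsmul_eq_mul]
  rcases Nat.eq_zero_or_pos nB with hB | hB
  · subst hB
    rw [Nat.add_zero]
    push_cast [Nat.cast_sub hA]
    ring
  · push_cast [Nat.cast_sub hA, Nat.cast_sub hB,
      Nat.cast_sub (le_trans hA (Nat.le_add_right _ _))]
    ring
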